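/- Let G be a bipartite-style setting with vertex sets H̄ and H, and suppose there exists a matching M between H̄ and H covering all nodes of H, where each matched pair (u_i, v_i) corresponds to a nonzero entry position of the submatrix Y_{H̄|H}. If the nonzero entries of Y_{H̄|H} (both real parts G_{uv} and imaginary parts B_{uv}) are drawn from a continuous (absolutely continuous) joint distribution, then the block matrix M = [[G_{H̄|H}, −B_{H̄|H}], [B_{H̄|H}, G_{H̄|H}]] has full column rank 2|H| almost surely. -/

import Mathlib

open MeasureTheory Matrix

/-- The zero set of a nonzero multivariate polynomial over `Fin n` is Lebesgue-null. -/
lemma mv_poly_null_fin : ∀ (n : ℕ) (p : MvPolynomial (Fin n) ℝ), p ≠ 0 →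
    volume {x : Fin n → ℝ | MvPolynomial.eval x p = 0} = 0 := by
  intro n
  induction n with
  | zero =>
    intro p hp
    obtain ⟨a, rfl⟩ := MvPolynomial.C_surjective (Fin 0) p
    have ha : a ≠ 0 := fun h => hp (by simp [h])
    have hempty : {x : Fin 0 → ℝ | MvPolynomial.eval x (MvPolynomial.C a) = 0} = ∅ := by
      ext x; simpa using ha
    rw [hempty]; simp
  | succ n ih =>
    intro p hp
    set q := MvPolynomial.finSuccEquiv ℝ n p with hqdef
    have hq0 : q ≠ 0 := by
      rw [hqdef]
      simpa using (AlgEquiv.injective (MvPolynomial.finSuccEquiv ℝ n)).ne hp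
    have hlc : q.leadingCoeff ≠ 0 := Polynomial.leadingCoeff_ne_zero.mpr hq0
    have hBad : volume {s : Fin n → ℝ | MvPolynomial.eval s q.leadingCoeff = 0} = 0 := ih _ hlc
    set T : Set ((Fin n → ℝ) × ℝ) :=
      {sy | Polynomial.eval sy.2 (q.map (MvPolynomial.eval sy.1)) = 0} with hTdef
    have hmeasf : Measurable fun sy : (Fin n → ℝ) × ℝ =>
        Polynomial.eval sy.2 (q.map (MvPolynomial.eval sy.1)) := by
      have hrw : ∀ sy : (Fin n → ℝ) × ℝ,
          Polynomial.eval sy.2 (q.map (MvPolynomial.eval sy.1)) =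
          ∑ i ∈ Finset.range (q.natDegree + 1),
            (MvPolynomial.eval sy.1 (q.coeff i)) * sy.2 ^ i := by
        intro sy
        rw [Polynomial.eval_map, Polynomial.eval₂_eq_sum_range]
      simp only [hrw]
      refine Finset.measurable_sum _ fun i _ => Measurable.mul ?_ ?_
      · exact (MvPolynomial.continuous_eval (p := q.coeff i)).measurable.comp measurable_fst
      · exact measurable_snd.pow_const i
    have hTm : MeasurableSet T := hmeasf (measurableSet_singleton 0)
    have hTnull : (volume : Measure ((Fin n → ℝ) × ℝ)) T = 0 := by
      rw [show (volume : Measure ((Fin n → ℝ) × ℝ)) =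
        (volume : Measure (Fin n → ℝ)).prod (volume : Measure ℝ) from rfl]
      rw [MeasureTheory.Measure.measure_prod_null hTm]
      filter_upwards [measure_eq_zero_iff_ae_notMem.1 hBad] with s hs
      have hne : q.map (MvPolynomial.eval s) ≠ 0 := by
        intro h
        apply hs
        have hc : (q.map (MvPolynomial.eval s)).coeff q.natDegree =
            MvPolynomial.eval s q.leadingCoeff := by
          rw [Polynomial.coeff_map]; rfl
        simp only [h, Polynomial.coeff_zero] at hc
        exact hc.symm
      have hfin : Set.Finite {y : ℝ | (q.map (MvPolynomial.eval s)).IsRoot y} :=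
        Polynomial.finite_setOf_isRoot hne
      exact measure_mono_null (fun y hy => hy) (hfin.measure_zero _)
    have hmp : MeasurePreserving
        (Prod.swap ∘ (MeasurableEquiv.piFinSuccAbove (fun _ : Fin (n + 1) => ℝ) 0))
        volume volume :=
      MeasureTheory.Measure.measurePreserving_swap.comp
        (MeasureTheory.volume_preserving_piFinSuccAbove (fun _ : Fin (n + 1) => ℝ) 0)
    have hS : {x : Fin (n + 1) → ℝ | MvPolynomial.eval x p = 0} =
        (Prod.swap ∘ (MeasurableEquiv.piFinSuccAbove (fun _ : Fin (n + 1) => ℝ) 0)) ⁻¹' T := by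
      ext x
      have hx : MvPolynomial.eval x p =
          Polynomial.eval (x 0) (q.map (MvPolynomial.eval (Fin.tail x))) := by
        have h3 := MvPolynomial.eval_eq_eval_mv_eval' (Fin.tail x) (x 0) p
        rw [Fin.cons_self_tail] at h3
        exact h3
      have htail : (fun j => x (Fin.succAbove 0 j)) = Fin.tail x := by
        funext j; simp [Fin.tail]
      simp only [Set.mem_preimage, Set.mem_setOf_eq, Function.comp_apply,
        MeasurableEquiv.piFinSuccAbove_apply, Fin.insertNthEquiv_zero, Prod.swap_prod_mk,
        Fin.removeNth_zero, hTdef]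
      rw [hx]
      constructor
      · intro h; convert h using 3 <;> rfl
      · intro h; convert h using 3 <;> rfl
    rw [hS]
    exact hmp.quasiMeasurePreserving.preimage_null hTnull

/-- The zero set of a nonzero multivariate polynomial over a finite type is Lebesgue-null. -/
lemma mv_poly_null {σ : Type*} [Fintype σ] [DecidableEq σ] (p : MvPolynomial σ ℝ) (hp : p ≠ 0) :
    volume {x : σ → ℝ | MvPolynomial.eval x p = 0} = 0 := by
  let e2 := Fintype.equivFin σ
  have hren : MvPolynomial.rename e2 p ≠ 0 := by
    intro h
    exact hp (MvPolynomial.rename_injective _ e2.injective (by simpa using h))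
  have hT := mv_poly_null_fin _ _ hren
  have hmp := MeasureTheory.volume_measurePreserving_piCongrLeft
    (fun _ : Fin (Fintype.card σ) => ℝ) e2
  have hS : {x : σ → ℝ | MvPolynomial.eval x p = 0} =
      (MeasurableEquiv.piCongrLeft (fun _ : Fin (Fintype.card σ) => ℝ) e2) ⁻¹'
      {y : Fin (Fintype.card σ) → ℝ | MvPolynomial.eval y (MvPolynomial.rename e2 p) = 0} := by
    ext x
    simp only [Set.mem_preimage, Set.mem_setOf_eq, MvPolynomial.eval_rename]
    have hc : ((MeasurableEquiv.piCongrLeft (fun _ : Fin (Fintype.card σ) => ℝ) e2) x) ∘ e2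
        = x := by
      funext i
      simp only [Function.comp_apply]
      exact MeasurableEquiv.piCongrLeft_apply_apply
        (β := fun _ : Fin (Fintype.card σ) => ℝ) e2 x i
    rw [hc]
  rw [hS]
  exact hmp.quasiMeasurePreserving.preimage_null hT

theorem block_matrix_full_rank_almost_surely
    {A Bt : Type*} [Fintype A] [Fintype Bt] [DecidableEq A] [DecidableEq Bt]
    (Adj : A → Bt → Prop) [∀ u v, Decidable (Adj u v)]
    (f : Bt → A) (hf : Function.Injective f) (hfm : ∀ v, Adj (f v) v) :
    MeasureTheory.volume {p : ((A × Bt) → ℝ) × ((A × Bt) → ℝ) |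
      (Matrix.fromBlocks
        (Matrix.of fun u v => if Adj u v then p.1 (u, v) else 0)
        (-(Matrix.of fun u v => if Adj u v then p.2 (u, v) else 0))
        (Matrix.of fun u v => if Adj u v then p.2 (u, v) else 0)
        (Matrix.of fun u v => if Adj u v then p.1 (u, v) else 0)).rank
        ≠ 2 * Fintype.card Bt} = 0 := by
  classical
  -- the generic polynomial matrix
  set Gm : Matrix A Bt (MvPolynomial ((A × Bt) ⊕ (A × Bt)) ℝ) :=
    Matrix.of fun u v => if Adj u v then MvPolynomial.X (Sum.inl (u, v)) else 0 with hGm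
  set Bm : Matrix A Bt (MvPolynomial ((A × Bt) ⊕ (A × Bt)) ℝ) :=
    Matrix.of fun u v => if Adj u v then MvPolynomial.X (Sum.inr (u, v)) else 0 with hBm
  set N := Matrix.fromBlocks Gm (-Bm) Bm Gm with hN
  set P : MvPolynomial ((A × Bt) ⊕ (A × Bt)) ℝ := (Nᵀ * N).det with hP
  -- evaluation of the polynomial matrix
  have hevalN : ∀ q : ((A × Bt) ⊕ (A × Bt)) → ℝ,
      N.map (MvPolynomial.eval q) = Matrix.fromBlocks
        (Matrix.of fun u v => if Adj u v then q (.inl (u, v)) else 0)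
        (-(Matrix.of fun u v => if Adj u v then q (.inr (u, v)) else 0))
        (Matrix.of fun u v => if Adj u v then q (.inr (u, v)) else 0)
        (Matrix.of fun u v => if Adj u v then q (.inl (u, v)) else 0) := by
    intro q
    ext (i | i) (j | j) <;>
      simp [hN, hGm, hBm, Matrix.map_apply, apply_ite (MvPolynomial.eval q)]
  have hevalP : ∀ q : ((A × Bt) ⊕ (A × Bt)) → ℝ,
      MvPolynomial.eval q P = ((N.map (MvPolynomial.eval q))ᵀ * N.map (MvPolynomial.eval q)).det := by
    intro q
    rw [hP]
    rw [RingHom.map_det (MvPolynomial.eval q) (Nᵀ * N), RingHom.mapMatrix_apply,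
      Matrix.map_mul, Matrix.transpose_map]
  -- the rank criterion
  have hrank : ∀ Mr : Matrix (A ⊕ A) (Bt ⊕ Bt) ℝ,
      (Mrᵀ * Mr).det ≠ 0 → Mr.rank = 2 * Fintype.card Bt := by
    intro Mr hd
    have hu : IsUnit (Mrᵀ * Mr) := (Matrix.isUnit_iff_isUnit_det _).mpr (isUnit_iff_ne_zero.mpr hd)
    have h1 := Matrix.rank_of_isUnit _ hu
    rw [Matrix.rank_transpose_mul_self] at h1
    rw [h1, Fintype.card_sum, two_mul]
  -- P is nonzero: evaluate at the matching point
  have hP0 : P ≠ 0 := by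
    intro h0
    set q₀ : ((A × Bt) ⊕ (A × Bt)) → ℝ :=
      Sum.elim (fun uv => if uv.1 = f uv.2 then 1 else 0) (fun _ => 0) with hq₀
    set E : Matrix A Bt ℝ := Matrix.of fun u v => if u = f v then (1 : ℝ) else 0 with hE
    have hGE : (Matrix.of fun u v => if Adj u v then q₀ (.inl (u, v)) else 0) = E := by
      ext u v
      by_cases h : u = f v
      · subst h; simp [hq₀, hE, hfm v]
      · simp [hq₀, hE, h]
    have hB0 : (Matrix.of fun u v => if Adj u v then q₀ (.inr (u, v)) else 0)
        = (0 : Matrix A Bt ℝ) := by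
      ext u v; simp [hq₀]
    have hEE : Eᵀ * E = 1 := by
      ext v w
      simp only [Matrix.mul_apply, Matrix.transpose_apply, hE, Matrix.of_apply,
        Matrix.one_apply, ite_mul, one_mul, zero_mul]
      rw [Finset.sum_ite_eq' Finset.univ (f v) fun u => if u = f w then (1 : ℝ) else 0]
      simp [hf.eq_iff]
    have h1 : MvPolynomial.eval q₀ P = 1 := by
      rw [hevalP, hevalN, hGE, hB0]
      simp only [neg_zero]
      rw [Matrix.fromBlocks_transpose, Matrix.fromBlocks_multiply]
      simp [hEE, Matrix.fromBlocks_one]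
    rw [h0] at h1
    simp at h1
  have hnull := mv_poly_null P hP0
  -- transfer to the product space
  have hmp := MeasureTheory.volume_measurePreserving_sumPiEquivProdPi_symm
    (fun _ : (A × Bt) ⊕ (A × Bt) => ℝ)
  refine measure_mono_null ?_ (hmp.quasiMeasurePreserving.preimage_null hnull)
  intro p hp
  simp only [Set.mem_preimage, Set.mem_setOf_eq]
  by_contra hne
  apply hp
  set q := (MeasurableEquiv.sumPiEquivProdPi (fun _ : (A × Bt) ⊕ (A × Bt) => ℝ)).symm p with hq
  have hq1 : ∀ uv : A × Bt, q (Sum.inl uv) = p.1 uv := fun _ => rfl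
  have hq2 : ∀ uv : A × Bt, q (Sum.inr uv) = p.2 uv := fun _ => rfl
  have hMr : N.map (MvPolynomial.eval q) = Matrix.fromBlocks
        (Matrix.of fun u v => if Adj u v then p.1 (u, v) else 0)
        (-(Matrix.of fun u v => if Adj u v then p.2 (u, v) else 0))
        (Matrix.of fun u v => if Adj u v then p.2 (u, v) else 0)
        (Matrix.of fun u v => if Adj u v then p.1 (u, v) else 0) := by
    rw [hevalN q]
    simp only [hq1, hq2]
  have hd : ((N.map (MvPolynomial.eval q))ᵀ * N.map (MvPolynomial.eval q)).det ≠ 0 := by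
    rw [← hevalP]
    exact hne
  have := hrank _ hd
  rw [hMr] at this
  exact this
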